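/- Let φ : R → S be a local ring morphism (i.e., φ(r) invertible in S implies r invertible in R). If S is semilocal, then R is semilocal. -/

import Mathlib

universe u v

/-- A ring `R` is semilocal if `R/J(R)` is semisimple artinian: there is a surjective
ring homomorphism from `R` onto a semisimple ring whose kernel is the Jacobson radical
of `R`. -/
def IsSemilocalRing (R : Type u) [Ring R] : Prop :=
  ∃ (T : Type u) (_ : Ring T) (_ : IsSemisimpleRing T) (π : R →+* T),
    Function.Surjective π ∧
      (RingHom.ker π : Set R) = ((⊥ : Ideal R).jacobson : Set R)



section JacobsonAux

variable {R : Type*} [Ring R]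

lemma jac_left_inv {x : R} (hx : x ∈ Ideal.jacobson (⊥ : Ideal R)) (c : R) :
    ∃ z : R, z * (1 - c * x) = 1 := by
  obtain ⟨z, hz⟩ := Ideal.mem_jacobson_iff.1 hx (-c)
  rw [Ideal.mem_bot, sub_eq_zero] at hz
  refine ⟨z, ?_⟩
  calc z * (1 - c * x) = z * -c * x + z := by noncomm_ring
  _ = 1 := hz

lemma isUnit_one_sub_of_mem_jacobson {x : R} (hx : x ∈ Ideal.jacobson (⊥ : Ideal R)) (c : R) :
    IsUnit (1 - c * x) := by
  obtain ⟨z, hz⟩ := jac_left_inv hx c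
  obtain ⟨w, hw⟩ := jac_left_inv hx (-(z * c))
  have hzval : 1 - -(z * c) * x = z := by
    have : z * (1 - c * x) = z - z * c * x := by noncomm_ring
    rw [this] at hz
    have : z = 1 + z * c * x := by
      rw [← hz]; noncomm_ring
    conv_rhs => rw [this]
    noncomm_ring
  rw [hzval] at hw
  have hleft : (1 - c * x) * z = 1 := by
    have : w = 1 - c * x := by
      calc w = w * (z * (1 - c * x)) := by rw [hz, mul_one]
      _ = (w * z) * (1 - c * x) := by rw [mul_assoc]
      _ = 1 - c * x := by rw [hw, one_mul]
    rw [← this, hw]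
  exact ⟨⟨1 - c * x, z, hleft, hz⟩, rfl⟩

lemma mem_jacobson_bot_of_forall_isUnit {x : R} (h : ∀ c : R, IsUnit (1 - c * x)) :
    x ∈ Ideal.jacobson (⊥ : Ideal R) := by
  rw [Ideal.mem_jacobson_iff]
  intro y
  obtain ⟨u, hu⟩ := h (-y)
  refine ⟨(↑u⁻¹ : R), ?_⟩
  have h1 : (↑u⁻¹ : R) * (1 - -y * x) = 1 := by rw [← hu]; exact u.inv_mul
  rw [Ideal.mem_bot, sub_eq_zero]
  calc (↑u⁻¹ : R) * y * x + ↑u⁻¹ = (↑u⁻¹ : R) * (1 - -y * x) := by noncomm_ring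
  _ = 1 := h1

lemma isUnit_one_sub_comm {a b : R} (h : IsUnit (1 - a * b)) : IsUnit (1 - b * a) := by
  obtain ⟨u, hu⟩ := h
  set i : R := (↑u⁻¹ : R) with hi
  have h1 : (1 - a * b) * i = 1 := by rw [hi, ← hu]; exact u.mul_inv
  have h2 : i * (1 - a * b) = 1 := by rw [hi, ← hu]; exact u.inv_mul
  refine isUnit_iff_exists.2 ⟨1 + b * i * a, ?_, ?_⟩
  · have e : (1 - b * a) * (1 + b * i * a) = 1 - b * a + b * ((1 - a * b) * i) * a := by
      noncomm_ring
    rw [e, h1]; noncomm_ring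
  · have e : (1 + b * i * a) * (1 - b * a) = 1 - b * a + b * (i * (1 - a * b)) * a := by
      noncomm_ring
    rw [e, h2]; noncomm_ring

end JacobsonAux

section A2

variable {R : Type*} [Ring R]

/-- The Jacobson radical as a two-sided ideal. -/
noncomputable def jacTwoSided (R : Type*) [Ring R] : TwoSidedIdeal R :=
  (Ideal.jacobson (⊥ : Ideal R)).toTwoSided

lemma mem_jacTwoSided {x : R} : x ∈ jacTwoSided R ↔ x ∈ Ideal.jacobson (⊥ : Ideal R) :=
  Ideal.mem_toTwoSided

lemma jacQuot_surjective : Function.Surjective ((jacTwoSided R).ringCon.mk') := by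
  rintro ⟨x⟩; exact ⟨x, rfl⟩

lemma jacQuot_ker {x : R} :
    (jacTwoSided R).ringCon.mk' x = 0 ↔ x ∈ Ideal.jacobson (⊥ : Ideal R) := by
  show ((x : (jacTwoSided R).ringCon.Quotient) = ((0 : R) : (jacTwoSided R).ringCon.Quotient)) ↔ _
  rw [RingCon.eq, (jacTwoSided R).rel_iff, sub_zero, mem_jacTwoSided]

-- unit lifting
lemma isUnit_of_map_isUnit {S T : Type*} [Ring S] [Ring T] (π : S →+* T)
    (hsurj : Function.Surjective π)
    (hker : ∀ s, π s = 0 → s ∈ Ideal.jacobson (⊥ : Ideal S)) {s : S}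
    (h : IsUnit (π s)) : IsUnit s := by
  obtain ⟨u, hu⟩ := h
  obtain ⟨t, ht⟩ := hsurj (↑u⁻¹ : T)
  have hst : IsUnit (s * t) := by
    have h0 : π (s * t - 1) = 0 := by
      rw [map_sub, map_mul, ← hu, ht, u.mul_inv, map_one, sub_self]
    have := isUnit_one_sub_of_mem_jacobson (hker _ h0) (-1)
    have e : 1 - (-1 : S) * (s * t - 1) = s * t := by noncomm_ring
    rwa [e] at this
  have hts : IsUnit (t * s) := by
    have h0 : π (t * s - 1) = 0 := by
      rw [map_sub, map_mul, ← hu, ht, u.inv_mul, map_one, sub_self]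
    have := isUnit_one_sub_of_mem_jacobson (hker _ h0) (-1)
    have e : 1 - (-1 : S) * (t * s - 1) = t * s := by noncomm_ring
    rwa [e] at this
  obtain ⟨α, hα⟩ := hst
  obtain ⟨β, hβ⟩ := hts
  have hr : s * (t * (↑α⁻¹ : S)) = 1 := by
    rw [← mul_assoc, ← hα]; exact α.mul_inv
  have hl : ((↑β⁻¹ : S) * t) * s = 1 := by
    rw [mul_assoc, ← hβ]; exact β.inv_mul
  have : (↑β⁻¹ : S) * t = t * (↑α⁻¹ : S) := by
    calc (↑β⁻¹ : S) * t = ((↑β⁻¹ : S) * t) * (s * (t * (↑α⁻¹ : S))) := by rw [hr, mul_one]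
    _ = (((↑β⁻¹ : S) * t) * s) * (t * (↑α⁻¹ : S)) := by rw [← mul_assoc]
    _ = t * (↑α⁻¹ : S) := by rw [hl, one_mul]
  exact isUnit_iff_exists.2 ⟨t * (↑α⁻¹ : S), hr, by rw [← this]; exact hl⟩

-- T-side
lemma isUnit_of_ker_toSpanSingleton_eq_bot {T : Type*} [Ring T] [IsSemisimpleRing T]
    (x : T) (h : LinearMap.ker (LinearMap.toSpanSingleton T T x) = ⊥) : IsUnit x := by
  have inj : Function.Injective (LinearMap.toSpanSingleton T T x) :=
    LinearMap.ker_eq_bot.1 h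
  have surj := IsArtinian.surjective_of_injective_endomorphism _ inj
  obtain ⟨u, hu⟩ := surj 1
  rw [LinearMap.toSpanSingleton_apply, smul_eq_mul] at hu
  have h2 : LinearMap.toSpanSingleton T T x (x * u - 1) = LinearMap.toSpanSingleton T T x 0 := by
    rw [LinearMap.toSpanSingleton_apply, LinearMap.toSpanSingleton_apply, smul_eq_mul,
      smul_eq_mul, zero_mul]
    calc (x * u - 1) * x = x * (u * x) - x := by noncomm_ring
    _ = 0 := by rw [hu, mul_one, sub_self]
  have := inj h2
  exact isUnit_iff_exists.2 ⟨u, by rwa [sub_eq_zero] at this, hu⟩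
section Core

variable {R : Type*} {T : Type*} [Ring R] [Ring T]

/-- Kernel of right multiplication by `ψ r` on `T`. -/
def auxN (ψ : R →+* T) (r : R) : Submodule T T :=
  LinearMap.ker (LinearMap.toSpanSingleton T T (ψ r))

lemma mem_auxN {ψ : R →+* T} {r : R} {t : T} : t ∈ auxN ψ r ↔ t * ψ r = 0 := by
  rw [auxN, LinearMap.mem_ker, LinearMap.toSpanSingleton_apply, smul_eq_mul]

variable [IsSemisimpleRing T]

lemma aux_step (ψ : R →+* T) (hloc : ∀ r : R, IsUnit (ψ r) → IsUnit r)
    {A X B : R} (hX : ¬ IsUnit X) (hfac : X = 1 - B * A) :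
    ∃ s : T, s * ψ A ≠ 0 ∧ (s * ψ A) * ψ X = 0 := by
  have hker : LinearMap.ker (LinearMap.toSpanSingleton T T (ψ X)) ≠ ⊥ := by
    intro hbot
    exact hX (hloc _ (isUnit_of_ker_toSpanSingleton_eq_bot _ hbot))
  obtain ⟨t, htmem, ht0⟩ := Submodule.exists_mem_ne_zero_of_ne_bot hker
  rw [LinearMap.mem_ker, LinearMap.toSpanSingleton_apply, smul_eq_mul] at htmem
  have hXimg : ψ X = 1 - ψ B * ψ A := by rw [hfac]; simp [map_sub, map_mul, map_one]
  have ht : (t * ψ B) * ψ A = t := by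
    have : t * (1 - ψ B * ψ A) = t - (t * ψ B) * ψ A := by noncomm_ring
    rw [hXimg, this, sub_eq_zero] at htmem
    exact htmem.symm
  refine ⟨t * ψ B, ?_, ?_⟩
  · rw [ht]; exact ht0
  · rw [ht]; exact htmem

lemma aux_vnr (ψ : R →+* T) (hloc : ∀ r : R, IsUnit (ψ r) → IsUnit r) (a : R) :
    ∃ b : R, a - a * b * a ∈ Ideal.jacobson (⊥ : Ideal R) := by
  obtain ⟨K, hKmem, hmax⟩ :=
    (set_has_maximal_iff_noetherian.mpr inferInstance)
      (Set.range fun b => auxN ψ (1 - b * a)) ⟨_, ⟨0, rfl⟩⟩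
  obtain ⟨b₀, hb₀⟩ := hKmem
  refine ⟨b₀, mem_jacobson_bot_of_forall_isUnit (fun c => ?_)⟩
  by_contra hcu
  have hfac : 1 - c * (a - a * b₀ * a) = 1 - (c * a) * (1 - b₀ * a) := by noncomm_ring
  obtain ⟨s, hs1, hs2⟩ := aux_step ψ hloc hcu hfac
  set b₂ : R := b₀ + (1 - b₀ * a) * c * (1 - a * b₀) with hb₂
  have hid : (1 : R) - b₂ * a = (1 - b₀ * a) * (1 - c * (a - a * b₀ * a)) := by
    rw [hb₂]; noncomm_ring
  have himg : ψ (1 - b₂ * a) = ψ (1 - b₀ * a) * ψ (1 - c * (a - a * b₀ * a)) := by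
    rw [hid, map_mul]
  have hle : K ≤ auxN ψ (1 - b₂ * a) := by
    rw [← hb₀]
    intro t ht
    rw [mem_auxN] at ht ⊢
    rw [himg, ← mul_assoc, ht, zero_mul]
  have hsmem : s ∈ auxN ψ (1 - b₂ * a) := by
    rw [mem_auxN, himg, ← mul_assoc]
    exact hs2
  have hsnot : s ∉ K := by
    rw [← hb₀, mem_auxN]
    exact hs1
  exact hmax _ ⟨b₂, rfl⟩ (lt_of_le_of_ne hle (fun h => hsnot (h ▸ hsmem)))

end Core
section Main

variable {R : Type*} {T : Type*} [Ring R] [Ring T] [IsSemisimpleRing T]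

lemma semisimple_jacQuot (ψ : R →+* T) (hloc : ∀ r : R, IsUnit (ψ r) → IsUnit r) :
    IsSemisimpleRing (jacTwoSided R).ringCon.Quotient := by
  set Q := (jacTwoSided R).ringCon.Quotient with hQ
  set π : R →+* Q := (jacTwoSided R).ringCon.mk' with hπ
  refine (isSemisimpleModule_iff _ _).2 ⟨?_⟩
  intro I
  -- find an idempotent generator of I
  obtain ⟨f, hfe, hfI, hIf⟩ : ∃ f : Q, f * f = f ∧ f ∈ I ∧ I = Submodule.span Q {f} := by
    obtain ⟨K, hKmem, hmax⟩ :=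
      (set_has_maximal_iff_noetherian.mpr inferInstance)
        {K : Submodule T T | ∃ (f : Q) (A : R),
          f * f = f ∧ f ∈ I ∧ π A = 1 - f ∧ auxN ψ A = K}
        ⟨auxN ψ 1, ⟨0, 1, by rw [mul_zero], Submodule.zero_mem I, by rw [map_one, sub_zero], rfl⟩⟩
    obtain ⟨f, A, hfe, hfI, hA, hNA⟩ := hKmem
    refine ⟨f, hfe, hfI, ?_⟩
    have le1 : Submodule.span Q {f} ≤ I := (Submodule.span_singleton_le_iff_mem f I).2 hfI
    by_contra hne
    have hlt : Submodule.span Q {f} < I := lt_of_le_of_ne le1 (fun h => hne h.symm)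
    obtain ⟨x, hxI, hxs⟩ := SetLike.exists_of_lt hlt
    set y : Q := x - x * f with hy
    have hyI : y ∈ I := by
      refine I.sub_mem hxI ?_
      have : x * f = x • f := (smul_eq_mul x f).symm
      rw [this]
      exact I.smul_mem x hfI
    have hy0 : y ≠ 0 := by
      intro h
      rw [hy, sub_eq_zero] at h
      exact hxs (Submodule.mem_span_singleton.2 ⟨x, by rw [smul_eq_mul, ← h]⟩)
    have hyf : y * f = 0 := by
      rw [hy, sub_mul, mul_assoc, hfe, sub_self]
    -- von Neumann regularity mod the radical
    obtain ⟨a, ha⟩ := jacQuot_surjective (R := R) y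
    obtain ⟨b, hb⟩ := aux_vnr ψ hloc a
    set c : Q := π b with hc
    have hvnr : y * c * y = y := by
      have h0 : π (a - a * b * a) = 0 := jacQuot_ker.2 hb
      rw [map_sub, map_mul, map_mul, sub_eq_zero] at h0
      rw [hc, ha.symm] at *
      exact h0.symm
    set e' : Q := c * y with he'
    have he'I : e' ∈ I := by
      rw [he', ← smul_eq_mul]
      exact I.smul_mem c hyI
    have he'idem : e' * e' = e' := by
      rw [he']
      calc c * y * (c * y) = c * (y * c * y) := by noncomm_ring
      _ = c * y := by rw [hvnr]
    have hy_e' : y * e' = y := by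
      rw [he', ← mul_assoc, hvnr]
    have he'f : e' * f = 0 := by
      rw [he', mul_assoc, hyf, mul_zero]
    set g : Q := e' - f * e' with hg
    have hgI : g ∈ I := by
      refine I.sub_mem he'I ?_
      rw [← smul_eq_mul]
      exact I.smul_mem f he'I
    have he'g : e' * g = e' := by
      rw [hg]
      calc e' * (e' - f * e') = e' * e' - (e' * f) * e' := by rw [mul_sub, mul_assoc e' f e']
      _ = e' := by rw [he'idem, he'f, zero_mul, sub_zero]
    have hgidem : g * g = g := by
      calc g * g = e' * g - f * (e' * g) := by rw [hg, sub_mul, mul_assoc f e' (e' - f * e')]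
      _ = g := by rw [he'g, hg]
    have hg0 : g ≠ 0 := by
      intro h
      rw [hg, sub_eq_zero] at h
      have : y * e' = 0 := by rw [h, ← mul_assoc, hyf, zero_mul]
      rw [hy_e'] at this
      exact hy0 this
    have hgf : g * f = 0 := by
      rw [hg, sub_mul, he'f, mul_assoc, he'f, mul_zero, sub_self]
    have hfg : f * g = 0 := by
      rw [hg]
      calc f * (e' - f * e') = (f - f * f) * e' := by rw [mul_sub, sub_mul, mul_assoc]
      _ = 0 := by rw [hfe, sub_self, zero_mul]
    have hf'idem : (f + g) * (f + g) = f + g := by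
      rw [add_mul, mul_add, mul_add, hfe, hfg, hgidem, hgf, add_zero, zero_add]
    have hf'I : f + g ∈ I := I.add_mem hfI hgI
    obtain ⟨b', hb'⟩ := jacQuot_surjective (R := R) g
    have h1fg : (1 - f) * g = g := by rw [sub_mul, one_mul, hfg, sub_zero]
    have hg1f : g * (1 - f) = g := by rw [mul_sub, mul_one, hgf, sub_zero]
    have hA' : π (A - A * b' * A) = 1 - (f + g) := by
      rw [map_sub, map_mul, map_mul, hA, hb', h1fg, hg1f]
      rw [sub_sub]
    have hXnonunit : ¬ IsUnit ((1 : R) - b' * A) := by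
      intro hu
      have := hu.map π
      rw [map_sub, map_one, map_mul, hb', hA, hg1f] at this
      obtain ⟨w, hw1, _⟩ := isUnit_iff_exists.1 this
      have : g = 0 := by
        calc g = g * ((1 - g) * w) := by rw [hw1, mul_one]
        _ = (g - g * g) * w := by rw [← mul_assoc, mul_sub, mul_one]
        _ = 0 := by rw [hgidem, sub_self, zero_mul]
      exact hg0 this
    obtain ⟨s, hs1, hs2⟩ := aux_step ψ hloc hXnonunit rfl
    have hid : A - A * b' * A = A * (1 - b' * A) := by noncomm_ring
    have himg : ψ (A - A * b' * A) = ψ A * ψ (1 - b' * A) := by rw [hid, map_mul]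
    have hle : auxN ψ A ≤ auxN ψ (A - A * b' * A) := by
      intro t ht
      rw [mem_auxN] at ht ⊢
      rw [himg, ← mul_assoc, ht, zero_mul]
    have hsmem : s ∈ auxN ψ (A - A * b' * A) := by
      rw [mem_auxN, himg, ← mul_assoc]
      exact hs2
    have hsnot : s ∉ auxN ψ A := by
      rw [mem_auxN]
      exact hs1
    rw [hNA] at hle hsnot
    exact hmax _ ⟨f + g, A - A * b' * A, hf'idem, hf'I, hA', rfl⟩
      (lt_of_le_of_ne hle (fun h => hsnot (h ▸ hsmem)))
  -- the complement
  refine ⟨Submodule.span Q {1 - f}, ?_, ?_⟩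
  · rw [Submodule.disjoint_def]
    intro z hzI hzJ
    obtain ⟨u, hu⟩ := Submodule.mem_span_singleton.1 (hIf ▸ hzI)
    obtain ⟨v, hv⟩ := Submodule.mem_span_singleton.1 hzJ
    rw [smul_eq_mul] at hu hv
    have h1 : z * f = z := by
      rw [← hu, mul_assoc, hfe]
    have h2 : z * f = 0 := by
      rw [← hv]
      calc v * (1 - f) * f = v * (f - f * f) := by rw [mul_assoc, sub_mul, one_mul]
      _ = 0 := by rw [hfe, sub_self, mul_zero]
    rw [h1] at h2
    exact h2
  · rw [codisjoint_iff_le_sup]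
    intro z _
    refine Submodule.mem_sup.2 ⟨z * f, ?_, z * (1 - f), ?_, by noncomm_ring⟩
    · exact hIf ▸ (Submodule.mem_span_singleton.2 ⟨z, smul_eq_mul _ _⟩)
    · exact Submodule.mem_span_singleton.2 ⟨z, smul_eq_mul _ _⟩

end Main

theorem isSemilocalRing_of_localRingHom {R : Type u} {S : Type v} [Ring R] [Ring S]
    (φ : R →+* S) (hloc : ∀ r : R, IsUnit (φ r) → IsUnit r)
    (hS : IsSemilocalRing S) : IsSemilocalRing R := by
  obtain ⟨T, ringT, ssT, πS, hsurj, hker⟩ := hS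
  letI := ringT
  letI := ssT
  have hkermem : ∀ s : S, πS s = 0 → s ∈ Ideal.jacobson (⊥ : Ideal S) := by
    intro s hs
    have h1 : s ∈ (RingHom.ker πS : Set S) := by
      simpa [RingHom.mem_ker] using hs
    rw [hker] at h1
    exact h1
  set ψ : R →+* T := πS.comp φ with hψ
  have hlocψ : ∀ r : R, IsUnit (ψ r) → IsUnit r := by
    intro r hr
    exact hloc r (isUnit_of_map_isUnit πS hsurj hkermem hr)
  refine ⟨(jacTwoSided R).ringCon.Quotient, inferInstance,
    semisimple_jacQuot ψ hlocψ, (jacTwoSided R).ringCon.mk', jacQuot_surjective, ?_⟩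
  ext x
  simp only [SetLike.mem_coe, RingHom.mem_ker]
  exact jacQuot_ker
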